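/- Define f(x) = 1/(4(1-x)^3) for x ∈ [0, 2/3] and f(x) = 0 for x ∈ (2/3, 1], and define the two-player payoff G₁(x₁,x₂) = −1 + 2x₂ − x₁x₂ if x₁ < x₂, G₁(x₁,x₂) = 1 − 2x₁ + x₁x₂ if x₁ > x₂, and G₁(x₁,x₁) = 0. Then ∫_0^1 G₁(x₁,x₂) f(x₂) dx₂ = 0 for every x₁ ∈ [0, 2/3], and ∫_0^1 G₁(x₁,x₂) f(x₂) dx₂ < 0 for every x₁ ∈ (2/3, 1]; hence f is a symmetric mixed-strategy Nash equilibrium of Dresher's two-player game. -/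

import Mathlib

open Real MeasureTheory

/-- Dresher's two-player Nash-equilibrium density:
`f(x) = 1/(4(1-x)³)` for `x ≤ 2/3`, and `0` above `2/3`. -/
noncomputable def fDresher (x : ℝ) : ℝ :=
  if x ≤ 2/3 then 1/(4*(1-x)^3) else 0

/-- The payoff of player 1 in Dresher's two-player game, averaged over the
eliminations: `G₁(x₁,x₂) = -1 + 2x₂ - x₁x₂` for `x₁ < x₂`,
`G₁(x₁,x₂) = 1 - 2x₁ + x₁x₂` for `x₁ > x₂`, and `0` on the diagonal. -/
noncomputable def G1 (x₁ x₂ : ℝ) : ℝ :=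
  if x₁ < x₂ then -1 + 2*x₂ - x₁*x₂
  else if x₂ < x₁ then 1 - 2*x₁ + x₁*x₂
  else 0

/-- Antiderivative computation. -/
lemma hasDerivAt_Fpq (p q x : ℝ) (hx : (1:ℝ) - x ≠ 0) :
    HasDerivAt (fun y : ℝ => p/(8*(1-y)^2) - q/(4*(1-y)))
      ((p - q*(1-x))/(4*(1-x)^3)) x := by
  have h1 : HasDerivAt (fun y : ℝ => 1 - y) (-1) x := by
    simpa using (hasDerivAt_id x).const_sub 1
  have h2 : HasDerivAt (fun y : ℝ => 8*(1-y)^2) (8*((2:ℕ)*(1-x)^1*(-1))) x :=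
    (h1.pow 2).const_mul 8
  have h3 : HasDerivAt (fun y : ℝ => 4*(1-y)) (4*(-1)) x := h1.const_mul 4
  have hd2 : 8*(1-x)^2 ≠ 0 := mul_ne_zero (by norm_num) (pow_ne_zero _ hx)
  have hd3 : 4*(1-x) ≠ 0 := mul_ne_zero (by norm_num) hx
  have hA := (hasDerivAt_const x p).div h2 hd2
  have hB := (hasDerivAt_const x q).div h3 hd3
  refine (hA.sub hB).congr_deriv ?_
  field_simp
  ring

lemma contOn_pq (p q a b : ℝ) (h : ∀ x ∈ Set.uIcc a b, (1:ℝ) - x ≠ 0) :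
    ContinuousOn (fun x : ℝ => (p - q*(1-x))/(4*(1-x)^3)) (Set.uIcc a b) := by
  apply ContinuousOn.div
  · fun_prop
  · fun_prop
  · intro x hx
    exact mul_ne_zero (by norm_num) (pow_ne_zero _ (h x hx))

lemma key_integral (p q a b : ℝ) (h : ∀ x ∈ Set.uIcc a b, (1:ℝ) - x ≠ 0) :
    ∫ x in a..b, (p - q*(1-x))/(4*(1-x)^3)
      = (p/(8*(1-b)^2) - q/(4*(1-b))) - (p/(8*(1-a)^2) - q/(4*(1-a))) := by
  refine intervalIntegral.integral_eq_sub_of_hasDerivAt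
    (fun x hx => hasDerivAt_Fpq p q x (h x hx)) ?_
  exact (contOn_pq p q a b h).intervalIntegrable

lemma intInt_pq (p q a b : ℝ) (h : ∀ x ∈ Set.uIcc a b, (1:ℝ) - x ≠ 0) :
    IntervalIntegrable (fun x : ℝ => (p - q*(1-x))/(4*(1-x)^3)) volume a b :=
  (contOn_pq p q a b h).intervalIntegrable

/-- `∫_0^1 G₁(x₁,x₂) f(x₂) dx₂ = 0` for every `x₁ ∈ [0, 2/3]`,
and `∫_0^1 G₁(x₁,x₂) f(x₂) dx₂ < 0` for every `x₁ ∈ (2/3, 1]`; hence `f` is a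
symmetric mixed-strategy Nash equilibrium of Dresher's two-player game. -/
theorem dresher_nash_equilibrium :
    (∀ x₁ ∈ Set.Icc (0:ℝ) (2/3),
      ∫ x₂ in (0:ℝ)..1, G1 x₁ x₂ * fDresher x₂ = 0) ∧
    (∀ x₁ ∈ Set.Ioc (2/3:ℝ) 1,
      ∫ x₂ in (0:ℝ)..1, G1 x₁ x₂ * fDresher x₂ < 0) := by
  constructor
  · rintro x₁ ⟨h0, h23⟩
    have hae : ∀ᵐ x : ℝ, x ≠ x₁ := by
      rw [MeasureTheory.ae_iff]
      have : {x : ℝ | ¬ x ≠ x₁} = {x₁} := by ext y; simp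
      rw [this]
      exact Real.volume_singleton
    -- piece 1 : on (0, x₁], except at x₁, integrand = A
    have hne1 : ∀ x ∈ Set.uIcc (0:ℝ) x₁, (1:ℝ) - x ≠ 0 := by
      intro x hx
      rw [Set.uIcc_of_le h0] at hx
      have := hx.2
      nlinarith [hx.1, hx.2]
    have hne2 : ∀ x ∈ Set.uIcc x₁ (2/3:ℝ), (1:ℝ) - x ≠ 0 := by
      intro x hx
      rw [Set.uIcc_of_le h23] at hx
      nlinarith [hx.1, hx.2]
    have heq1 : ∀ᵐ x : ℝ, x ∈ Set.uIoc (0:ℝ) x₁ →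
        G1 x₁ x * fDresher x = (1 - x₁ - x₁*(1-x))/(4*(1-x)^3) := by
      filter_upwards [hae] with x hx hmem
      rw [Set.uIoc_of_le h0] at hmem
      have hlt : x < x₁ := lt_of_le_of_ne hmem.2 hx
      have hle : x ≤ 2/3 := le_trans hmem.2 h23
      rw [G1, fDresher, if_neg (by linarith), if_pos hlt, if_pos hle]
      field_simp
      ring
    have heq2 : ∀ᵐ x : ℝ, x ∈ Set.uIoc x₁ (2/3:ℝ) →
        G1 x₁ x * fDresher x = (1 - x₁ - (2-x₁)*(1-x))/(4*(1-x)^3) := by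
      filter_upwards with x hmem
      rw [Set.uIoc_of_le h23] at hmem
      rw [G1, fDresher, if_pos hmem.1, if_pos hmem.2]
      field_simp
      ring
    have heq3 : ∀ᵐ x : ℝ, x ∈ Set.uIoc (2/3:ℝ) 1 →
        G1 x₁ x * fDresher x = 0 := by
      filter_upwards with x hmem
      rw [Set.uIoc_of_le (by norm_num : (2/3:ℝ) ≤ 1)] at hmem
      rw [fDresher, if_neg (by linarith [hmem.1])]
      ring
    have hI1 : IntervalIntegrable (fun x => G1 x₁ x * fDresher x) volume 0 x₁ := by
      refine (intInt_pq (1-x₁) x₁ 0 x₁ hne1).congr_ae ?_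
      exact (MeasureTheory.ae_restrict_iff' measurableSet_uIoc).2
        (heq1.mono fun x hx hm => (hx hm).symm)
    have hI2 : IntervalIntegrable (fun x => G1 x₁ x * fDresher x) volume x₁ (2/3) := by
      refine (intInt_pq (1-x₁) (2-x₁) x₁ (2/3) hne2).congr_ae ?_
      exact (MeasureTheory.ae_restrict_iff' measurableSet_uIoc).2
        (heq2.mono fun x hx hm => (hx hm).symm)
    have hI3 : IntervalIntegrable (fun x => G1 x₁ x * fDresher x) volume (2/3) 1 := by
      refine (intervalIntegrable_const (c := (0:ℝ))).congr_ae ?_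
      exact (MeasureTheory.ae_restrict_iff' measurableSet_uIoc).2
        (heq3.mono fun x hx hm => (hx hm).symm)
    have hsplit : ∫ x in (0:ℝ)..1, G1 x₁ x * fDresher x
        = (∫ x in (0:ℝ)..x₁, G1 x₁ x * fDresher x)
          + (∫ x in x₁..(2/3:ℝ), G1 x₁ x * fDresher x)
          + (∫ x in (2/3:ℝ)..1, G1 x₁ x * fDresher x) := by
      rw [intervalIntegral.integral_add_adjacent_intervals hI1 hI2,
        intervalIntegral.integral_add_adjacent_intervals (hI1.trans hI2) hI3]
    rw [hsplit,
      intervalIntegral.integral_congr_ae heq1,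
      intervalIntegral.integral_congr_ae heq2,
      intervalIntegral.integral_congr_ae heq3,
      key_integral _ _ _ _ hne1, key_integral _ _ _ _ hne2,
      intervalIntegral.integral_zero]
    have hx1 : (1:ℝ) - x₁ ≠ 0 := by nlinarith
    field_simp
    ring
  · rintro x₁ ⟨h23, h1⟩
    have hne : ∀ x ∈ Set.uIcc (0:ℝ) (2/3), (1:ℝ) - x ≠ 0 := by
      intro x hx
      rw [Set.uIcc_of_le (by norm_num : (0:ℝ) ≤ 2/3)] at hx
      nlinarith [hx.1, hx.2]
    have heq1 : ∀ᵐ x : ℝ, x ∈ Set.uIoc (0:ℝ) (2/3) →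
        G1 x₁ x * fDresher x = (1 - x₁ - x₁*(1-x))/(4*(1-x)^3) := by
      filter_upwards with x hmem
      rw [Set.uIoc_of_le (by norm_num : (0:ℝ) ≤ 2/3)] at hmem
      have hlt : x < x₁ := lt_of_le_of_lt hmem.2 h23
      rw [G1, fDresher, if_neg (by linarith), if_pos hlt, if_pos hmem.2]
      field_simp
      ring
    have heq3 : ∀ᵐ x : ℝ, x ∈ Set.uIoc (2/3:ℝ) 1 →
        G1 x₁ x * fDresher x = 0 := by
      filter_upwards with x hmem
      rw [Set.uIoc_of_le (by norm_num : (2/3:ℝ) ≤ 1)] at hmem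
      rw [fDresher, if_neg (by linarith [hmem.1])]
      ring
    have hI1 : IntervalIntegrable (fun x => G1 x₁ x * fDresher x) volume 0 (2/3) := by
      refine (intInt_pq (1-x₁) x₁ 0 (2/3) hne).congr_ae ?_
      exact (MeasureTheory.ae_restrict_iff' measurableSet_uIoc).2
        (heq1.mono fun x hx hm => (hx hm).symm)
    have hI3 : IntervalIntegrable (fun x => G1 x₁ x * fDresher x) volume (2/3) 1 := by
      refine (intervalIntegrable_const (c := (0:ℝ))).congr_ae ?_
      exact (MeasureTheory.ae_restrict_iff' measurableSet_uIoc).2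
        (heq3.mono fun x hx hm => (hx hm).symm)
    have hsplit : ∫ x in (0:ℝ)..1, G1 x₁ x * fDresher x
        = (∫ x in (0:ℝ)..(2/3:ℝ), G1 x₁ x * fDresher x)
          + (∫ x in (2/3:ℝ)..1, G1 x₁ x * fDresher x) := by
      rw [intervalIntegral.integral_add_adjacent_intervals hI1 hI3]
    rw [hsplit,
      intervalIntegral.integral_congr_ae heq1,
      intervalIntegral.integral_congr_ae heq3,
      key_integral _ _ _ _ hne, intervalIntegral.integral_zero]
    norm_num
    nlinarith
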